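/- arXiv:1412.5113 — 2 statements merged into one kernel-verified Lean document; each statement's English description precedes it below -/
import Mathlib

section
/- Let G and H be groups and τ : G → H a half-isomorphism. Then τ maps the commutator subgroup of G onto the commutator subgroup of H: τ([G,G]) = [H,H]. -/
section aux

variable {G H : Type*} [Group G] [Group H]

lemma half_sq (τ : G → H)
    (hhalf : ∀ x y : G, τ (x * y) = τ x * τ y ∨ τ (x * y) = τ y * τ x) (x : G) :
    τ (x * x) = τ x * τ x := by
  rcases hhalf x x with h | h <;> exact h

lemma half_one (τ : G → H)
    (hhalf : ∀ x y : G, τ (x * y) = τ x * τ y ∨ τ (x * y) = τ y * τ x) :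
    τ 1 = 1 := by
  have h := half_sq τ hhalf 1
  rw [one_mul] at h
  exact (left_eq_mul.mp h)

/-- If `τ(xy) = τx τy` and `x,y` commute, then `τx, τy` commute. -/
lemma half_comm_aux (τ : G → H)
    (hhalf : ∀ x y : G, τ (x * y) = τ x * τ y ∨ τ (x * y) = τ y * τ x)
    {x y : G} (hc : x * y = y * x) (h1 : τ (x * y) = τ x * τ y) :
    τ x * τ y = τ y * τ x := by
  rcases hhalf x (x * y) with h2 | h2
  · -- τ(x*(x*y)) = τx * (τx*τy)
    have hx2y : τ (x * x * y) = τ x * τ x * τ y := by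
      rw [mul_assoc, h2, h1, mul_assoc]
    have key : x * x * y * y = (x * y) * (x * y) := by
      calc x * x * y * y = x * (x * y) * y := by group
        _ = x * (y * x) * y := by rw [hc]
        _ = (x * y) * (x * y) := by group
    have hsq : τ ((x * y) * (x * y)) = (τ x * τ y) * (τ x * τ y) := by
      rw [half_sq τ hhalf, h1]
    rcases hhalf (x * x * y) y with h3 | h3
    · have e : (τ x * τ y) * (τ x * τ y) = τ x * τ x * τ y * τ y := by
        rw [← hsq, ← key, h3, hx2y]
      have e2 : τ x * (τ y * (τ x * τ y)) = τ x * (τ x * (τ y * τ y)) := by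
        rw [← mul_assoc, e]; group
      have e3 : τ y * (τ x * τ y) = τ x * (τ y * τ y) := mul_left_cancel e2
      have e4 : (τ y * τ x) * τ y = (τ x * τ y) * τ y := by
        rw [mul_assoc, e3, mul_assoc]
      exact (mul_right_cancel e4).symm
    · have e : (τ x * τ y) * (τ x * τ y) = τ y * (τ x * τ x * τ y) := by
        rw [← hsq, ← key, h3, hx2y]
      have e2 : (τ x * (τ y * τ x)) * τ y = (τ y * (τ x * τ x)) * τ y := by
        rw [show (τ x * (τ y * τ x)) * τ y = (τ x * τ y) * (τ x * τ y) by group, e]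
        group
      have e3 : τ x * (τ y * τ x) = τ y * (τ x * τ x) := mul_right_cancel e2
      have e4 : (τ x * τ y) * τ x = (τ y * τ x) * τ x := by
        rw [mul_assoc, e3, mul_assoc]
      exact mul_right_cancel e4
  · -- τ(x*(x*y)) = τ(x*y) * τx
    have hA : τ (x * x * y) = (τ x * τ y) * τ x := by
      rw [mul_assoc, h2, h1]
    rcases hhalf (x * x) y with h3 | h3
    · have hB : τ (x * x * y) = (τ x * τ x) * τ y := by
        rw [h3, half_sq τ hhalf]
      have e : (τ x * τ y) * τ x = (τ x * τ x) * τ y := by rw [← hA, hB]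
      have e2 : τ x * (τ y * τ x) = τ x * (τ x * τ y) := by
        rw [← mul_assoc, e, mul_assoc]
      exact (mul_left_cancel e2).symm
    · have hB : τ (x * x * y) = τ y * (τ x * τ x) := by
        rw [h3, half_sq τ hhalf]
      have e : (τ x * τ y) * τ x = (τ y * τ x) * τ x := by
        rw [← hA, hB]; group
      exact mul_right_cancel e

/-- A half-isomorphism preserves commuting pairs. -/
lemma half_comm (τ : G → H)
    (hhalf : ∀ x y : G, τ (x * y) = τ x * τ y ∨ τ (x * y) = τ y * τ x)
    {x y : G} (hc : x * y = y * x) :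
    τ x * τ y = τ y * τ x := by
  rcases hhalf x y with h1 | h1
  · exact half_comm_aux τ hhalf hc h1
  · have h1' : τ (y * x) = τ y * τ x := by rw [← hc]; exact h1
    exact (half_comm_aux τ hhalf hc.symm h1').symm

/-- Half-isomorphism maps commutator subgroup into commutator subgroup. -/
lemma half_maps_commutator (τ : G → H)
    (hhalf : ∀ x y : G, τ (x * y) = τ x * τ y ∨ τ (x * y) = τ y * τ x)
    {x : G} (hx : x ∈ commutator G) : τ x ∈ commutator H := by
  let φ : G →* Abelianization H :=
    { toFun := fun g => Abelianization.of (τ g)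
      map_one' := by
        show Abelianization.of (τ 1) = 1
        rw [half_one τ hhalf, map_one]
      map_mul' := fun a b => by
        show Abelianization.of (τ (a * b)) =
          Abelianization.of (τ a) * Abelianization.of (τ b)
        rcases hhalf a b with h | h <;> rw [h, map_mul]
        exact mul_comm _ _ }
  have hker : φ x = 1 := Abelianization.commutator_subset_ker φ hx
  have h1 : Abelianization.of (τ x) = 1 := hker
  exact (QuotientGroup.eq_one_iff (τ x)).mp h1

end aux

/-- A half-isomorphism of groups maps the commutator subgroup onto the
commutator subgroup. -/
theorem half_isomorphism_commutator {G H : Type*} [Group G] [Group H] (τ : G → H)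
    (hbij : Function.Bijective τ)
    (hhalf : ∀ x y : G, τ (x * y) = τ x * τ y ∨ τ (x * y) = τ y * τ x) :
    τ '' (commutator G : Set G) = (commutator H : Set H) := by
  let e : G ≃ H := Equiv.ofBijective τ hbij
  have hhalf' : ∀ a b : H, e.symm (a * b) = e.symm a * e.symm b ∨
      e.symm (a * b) = e.symm b * e.symm a := by
    intro a b
    have hτa : τ (e.symm a) = a := e.apply_symm_apply a
    have hτb : τ (e.symm b) = b := e.apply_symm_apply b
    rcases hhalf (e.symm a) (e.symm b) with h | h
    · left
      rw [hτa, hτb] at h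
      rw [← h]
      exact e.symm_apply_apply _
    · rcases hhalf (e.symm b) (e.symm a) with h2 | h2
      · -- both products map with a swap ⇒ they commute
        have hxy : e.symm a * e.symm b = e.symm b * e.symm a :=
          hbij.injective (h.trans h2.symm)
        have hcomm := half_comm τ hhalf hxy
        left
        have h' : τ (e.symm a * e.symm b) = a * b := by
          rw [h, ← hcomm, hτa, hτb]
        rw [← h']
        exact e.symm_apply_apply _
      · right
        have h' : τ (e.symm b * e.symm a) = a * b := by
          rw [h2, hτa, hτb]
        rw [← h']
        exact e.symm_apply_apply _
  ext h
  constructor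
  · rintro ⟨x, hx, rfl⟩
    exact half_maps_commutator τ hhalf hx
  · intro hh
    exact ⟨e.symm h, half_maps_commutator (⇑e.symm) hhalf' hh, e.apply_symm_apply h⟩
end

section
/- Let τ : G → H be a half-isomorphism of groups that is neither an isomorphism nor an anti-isomorphism. Then there exist x, y, z ∈ G such that [x,y] ≠ 1, [x,z] ≠ 1, τ(xy) = τ(x)τ(y) ≠ τ(y)τ(x), and τ(xz) = τ(z)τ(x) ≠ τ(x)τ(z). -/
/-- Key computational lemma: if `x` and `y` commute and `τ(xy) = τx·τy`,
then the images commute. -/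
lemma scott_comm {G H : Type*} [Group G] [Group H] (τ : G → H)
    (hhalf : ∀ x y : G, τ (x * y) = τ x * τ y ∨ τ (x * y) = τ y * τ x)
    {x y : G} (h : x * y = y * x) (hc : τ (x * y) = τ x * τ y) :
    τ x * τ y = τ y * τ x := by
  by_contra hne
  set a := τ x with ha
  set b := τ y with hb
  have hyx : y * x = x * y := h.symm
  have hsq : ∀ w : G, τ (w * w) = τ w * τ w := fun w => by
    rcases hhalf w w with h2 | h2 <;> exact h2
  have ha2 : τ (x * x) = a * a := hsq x
  have hb2 : τ (y * y) = b * b := hsq y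
  have e1 : τ ((x * x) * (y * y)) = (a * b) * (a * b) := by
    have hel : (x * x) * (y * y) = (x * y) * (x * y) := by
      rw [show (x * y) * (x * y) = x * (y * x) * y from by group, hyx]; group
    rw [hel, hsq (x * y), hc]
  -- star : abab = bbaa
  have star : (a * b) * (a * b) = (b * b) * (a * a) := by
    rcases hhalf (x * x) (y * y) with h2 | h2
    · rw [e1, ha2, hb2] at h2
      exact absurd (by
        calc a * b = a⁻¹ * ((a * a) * (b * b)) * b⁻¹ := by group
          _ = a⁻¹ * ((a * b) * (a * b)) * b⁻¹ := by rw [← h2]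
          _ = b * a := by group) hne
    · rw [e1, ha2, hb2] at h2; exact h2
  -- es : τ(x(xy)) = (ab)a
  have es : τ (x * (x * y)) = (a * b) * a := by
    rcases hhalf x (x * y) with h2 | h2
    · exfalso
      rw [hc] at h2
      have e1' : τ ((x * (x * y)) * y) = (a * b) * (a * b) := by
        rw [show (x * (x * y)) * y = (x * x) * (y * y) from by group]; exact e1
      rcases hhalf (x * (x * y)) y with h3 | h3 <;> rw [e1', h2] at h3
      · exact hne (by
          calc a * b = a⁻¹ * ((a * (a * b)) * b) * b⁻¹ := by group
            _ = a⁻¹ * ((a * b) * (a * b)) * b⁻¹ := by rw [← h3]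
            _ = b * a := by group)
      · exact hne (by
          calc a * b = ((a * b) * (a * b)) * b⁻¹ * a⁻¹ := by group
            _ = (b * (a * (a * b))) * b⁻¹ * a⁻¹ := by rw [h3]
            _ = b * a := by group)
    · rw [hc] at h2; exact h2
  -- et : τ(x(x(xy))) = ((ab)a)a
  have et : τ (x * (x * (x * y))) = ((a * b) * a) * a := by
    have h4 := hhalf (x * x) (x * y)
    rw [show (x * x) * (x * y) = x * (x * (x * y)) from by group, ha2, hc] at h4
    rcases hhalf x (x * (x * y)) with h5 | h5 <;> rw [es] at h5
    · exfalso
      rcases h4 with h4 | h4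
      · have E : a * ((a * b) * a) = (a * a) * (a * b) := h5.symm.trans h4
        exact hne (by
          calc a * b = (a⁻¹ * a⁻¹) * ((a * a) * (a * b)) := by group
            _ = (a⁻¹ * a⁻¹) * (a * ((a * b) * a)) := by rw [← E]
            _ = b * a := by group)
      · have E : a * ((a * b) * a) = (a * b) * (a * a) := h5.symm.trans h4
        exact hne (by
          calc a * b = a⁻¹ * (a * ((a * b) * a)) * a⁻¹ := by group
            _ = a⁻¹ * ((a * b) * (a * a)) * a⁻¹ := by rw [E]
            _ = b * a := by group)
    · exact h5
  -- the element x³y² via three decompositions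
  have h6 := hhalf x ((x * x) * (y * y))
  rw [e1] at h6
  have h7 := hhalf (x * (x * (x * y))) y
  rw [et, show (x * (x * (x * y))) * y = x * ((x * x) * (y * y)) from by group] at h7
  have h8 := hhalf (x * (x * y)) (x * y)
  rw [es, hc, show (x * (x * y)) * (x * y) = ((x * x) * (y * x)) * y from by group,
    hyx, show ((x * x) * (x * y)) * y = x * ((x * x) * (y * y)) from by group] at h8
  rcases h6 with h6 | h6
  · rcases h8 with h8 | h8
    · have E : a * ((a * b) * (a * b)) = ((a * b) * a) * (a * b) := h6.symm.trans h8
      exact hne (by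
        calc a * b = a⁻¹ * (a * ((a * b) * (a * b))) * b⁻¹ * a⁻¹ := by group
          _ = a⁻¹ * (((a * b) * a) * (a * b)) * b⁻¹ * a⁻¹ := by rw [E]
          _ = b * a := by group)
    · have E : a * ((a * b) * (a * b)) = (a * b) * ((a * b) * a) := h6.symm.trans h8
      have E2 : (a * b) * (a * b) = (b * a) * (b * a) := by
        calc (a * b) * (a * b) = a⁻¹ * (a * ((a * b) * (a * b))) := by group
          _ = a⁻¹ * ((a * b) * ((a * b) * a)) := by rw [E]
          _ = (b * a) * (b * a) := by group
      have E3 : (b * b) * (a * a) = (b * a) * (b * a) := star.symm.trans E2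
      exact hne (by
        calc a * b = b⁻¹ * ((b * a) * (b * a)) * a⁻¹ := by group
          _ = b⁻¹ * ((b * b) * (a * a)) * a⁻¹ := by rw [← E3]
          _ = b * a := by group)
  · rcases h7 with h7 | h7
    · have E : ((a * b) * (a * b)) * a = (((a * b) * a) * a) * b := h6.symm.trans h7
      exact hne (by
        calc a * b = (a⁻¹ * b⁻¹ * a⁻¹) * ((((a * b) * a) * a) * b) := by group
          _ = (a⁻¹ * b⁻¹ * a⁻¹) * (((a * b) * (a * b)) * a) := by rw [← E]
          _ = b * a := by group)
    · have E : ((a * b) * (a * b)) * a = b * (((a * b) * a) * a) := h6.symm.trans h7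
      exact hne (by
        calc a * b = b⁻¹ * (b * (((a * b) * a) * a)) * (a⁻¹ * a⁻¹) := by group
          _ = b⁻¹ * (((a * b) * (a * b)) * a) * (a⁻¹ * a⁻¹) := by rw [← E]
          _ = b⁻¹ * (((b * b) * (a * a)) * a) * (a⁻¹ * a⁻¹) := by rw [star]
          _ = b * a := by group)

/-- A nontrivial half-isomorphism of groups admits a Gagola–Giuliani triple. -/
theorem gagola_giuliani_triple {G H : Type*} [Group G] [Group H] (τ : G → H)
    (hbij : Function.Bijective τ)
    (hhalf : ∀ x y : G, τ (x * y) = τ x * τ y ∨ τ (x * y) = τ y * τ x)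
    (hniso : ¬ ∀ x y : G, τ (x * y) = τ x * τ y)
    (hnanti : ¬ ∀ x y : G, τ (x * y) = τ y * τ x) :
    ∃ x y z : G, x⁻¹ * y⁻¹ * x * y ≠ 1 ∧ x⁻¹ * z⁻¹ * x * z ≠ 1 ∧
      τ (x * y) = τ x * τ y ∧ τ x * τ y ≠ τ y * τ x ∧
      τ (x * z) = τ z * τ x ∧ τ z * τ x ≠ τ x * τ z := by
  by_contra hcon
  push_neg at hcon
  -- full Scott lemma
  have scott : ∀ u v : G, u * v = v * u → τ u * τ v = τ v * τ u := by
    intro u v huv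
    rcases hhalf u v with hc | hc
    · exact scott_comm τ hhalf huv hc
    · have hc' : τ (v * u) = τ v * τ u := by rw [← huv]; exact hc
      exact (scott_comm τ hhalf huv.symm hc').symm
  have ncomm : ∀ u v : G, τ u * τ v ≠ τ v * τ u → u⁻¹ * v⁻¹ * u * v ≠ 1 := by
    intro u v hne hcomm
    exact hne (scott u v (by
      have : u * (u⁻¹ * v⁻¹ * u * v) = u * 1 := by rw [hcomm]
      calc u * v = v * (u * (u⁻¹ * v⁻¹ * u * v)) := by group
        _ = v * (u * 1) := by rw [hcomm]
        _ = v * u := by group))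
  -- τ 1 = 1
  have hone : τ (1 : G) = 1 := by
    have h1 := hhalf (1 : G) 1
    rw [one_mul] at h1
    rcases h1 with h1 | h1 <;> exact (mul_left_cancel (a := τ (1:G)) (by rw [← h1, mul_one])).symm
  -- witnesses
  push_neg at hniso hnanti
  obtain ⟨x₀, y₀, hx₀⟩ := hniso
  obtain ⟨x₁, y₁, hx₁⟩ := hnanti
  have h₀ : τ (x₀ * y₀) = τ y₀ * τ x₀ := (hhalf x₀ y₀).resolve_left hx₀
  have hne₀ : τ x₀ * τ y₀ ≠ τ y₀ * τ x₀ := fun e => hx₀ (h₀.trans e.symm)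
  have h₁ : τ (x₁ * y₁) = τ x₁ * τ y₁ := (hhalf x₁ y₁).resolve_right hx₁
  have hne₁ : τ x₁ * τ y₁ ≠ τ y₁ * τ x₁ := fun e => hx₁ (h₁.trans e)
  -- x₁ is fully multiplicative
  have P1 : ∀ z : G, τ (x₁ * z) = τ x₁ * τ z := by
    intro z
    rcases hhalf x₁ z with h | h
    · exact h
    · by_cases he : τ x₁ * τ z = τ z * τ x₁
      · rw [h, ← he]
      · exact (he (hcon x₁ y₁ z (ncomm x₁ y₁ hne₁) (ncomm x₁ z he) h₁ hne₁ h).symm).elim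
  -- x₀ is fully anti-multiplicative
  have Q0 : ∀ z : G, τ (x₀ * z) = τ z * τ x₀ := by
    intro z
    rcases hhalf x₀ z with h | h
    · by_cases he : τ x₀ * τ z = τ z * τ x₀
      · rw [h, he]
      · exact (hne₀ (hcon x₀ z y₀ (ncomm x₀ z he) (ncomm x₀ y₀ hne₀) h he h₀).symm).elim
    · exact h
  -- inverse versions
  have P1inv : ∀ z : G, τ (x₁⁻¹ * z) = (τ x₁)⁻¹ * τ z := by
    intro z
    have := P1 (x₁⁻¹ * z)
    rw [show x₁ * (x₁⁻¹ * z) = z from by group] at this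
    rw [eq_inv_mul_iff_mul_eq]
    exact this.symm
  have Q0inv : ∀ z : G, τ (x₀⁻¹ * z) = τ z * (τ x₀)⁻¹ := by
    intro z
    have := Q0 (x₀⁻¹ * z)
    rw [show x₀ * (x₀⁻¹ * z) = z from by group] at this
    rw [eq_mul_inv_iff_mul_eq]
    exact this.symm
  -- dichotomy for w = x₁ * x₀
  set w := x₁ * x₀ with hw
  have hPQ : (∀ z : G, τ (w * z) = τ w * τ z) ∨ (∀ z : G, τ (w * z) = τ z * τ w) := by
    by_cases hM : ∃ z : G, τ (w * z) = τ w * τ z ∧ τ w * τ z ≠ τ z * τ w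
    · left
      intro z
      rcases hhalf w z with h | h
      · exact h
      · by_cases he : τ w * τ z = τ z * τ w
        · rw [h, ← he]
        · obtain ⟨z₁, hz₁, hz₁'⟩ := hM
          exact (he (hcon w z₁ z (ncomm w z₁ hz₁') (ncomm w z he) hz₁ hz₁' h).symm).elim
    · right
      intro z
      rcases hhalf w z with h | h
      · by_cases he : τ w * τ z = τ z * τ w
        · rw [h, he]
        · exact absurd ⟨z, h, he⟩ hM
      · exact h
  rcases hPQ with Pw | Qw
  · -- then x₀ = x₁⁻¹ w is fully multiplicative; contradicts hx₀
    apply hx₀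
    have e1 : τ (x₀ * y₀) = (τ x₁)⁻¹ * (τ w * τ y₀) := by
      rw [show x₀ * y₀ = x₁⁻¹ * (w * y₀) from by rw [hw]; group, P1inv, Pw]
    have e2 : τ x₀ = (τ x₁)⁻¹ * τ w := by
      rw [show x₀ = x₁⁻¹ * w from by rw [hw]; group, P1inv]
    rw [e1, e2, mul_assoc]
  · -- then x₁ = w x₀⁻¹ is fully anti-multiplicative; contradicts hx₁
    apply hx₁
    have e1 : τ (x₁ * y₁) = τ y₁ * ((τ x₀)⁻¹ * τ w) := by
      rw [show x₁ * y₁ = w * (x₀⁻¹ * y₁) from by rw [hw]; group, Qw, Q0inv, mul_assoc]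
    have e2 : τ x₁ = (τ x₀)⁻¹ * τ w := by
      have := Qw x₀⁻¹
      rw [show w * x₀⁻¹ = x₁ from by rw [hw]; group] at this
      rw [this, show τ x₀⁻¹ = (τ x₀)⁻¹ from by
        rw [show x₀⁻¹ = x₀⁻¹ * 1 from (mul_one _).symm, Q0inv, hone, one_mul]]
    rw [e1, e2]
end
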